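/- Let D ≥ 2, R > 0, σ > 0, r ≥ 0, and f(r) = exp(-r²/(2σ²)) · ∫₀^π sin^{D-2}(φ) · exp(rR cos(φ)/σ²) dφ. Then f'(r) has the same sign as ∫₀^π (r/σ²)·(R² sin²(φ)/((D-1)σ²) - 1)·sin^{D-2}(φ)·exp(rR cos(φ)/σ²) dφ. -/

import Mathlib

open Real MeasureTheory intervalIntegral

theorem stmt_1 (D : ℕ) (hD : 2 ≤ D) (R σ : ℝ) (hR : 0 < R) (hσ : 0 < σ)
    (r : ℝ) (hr : 0 ≤ r)
    (f : ℝ → ℝ)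
    (hf : ∀ s : ℝ, f s = Real.exp (-s ^ 2 / (2 * σ ^ 2)) *
      ∫ φ in (0:ℝ)..Real.pi,
        Real.sin φ ^ (D - 2) * Real.exp (s * R * Real.cos φ / σ ^ 2)) :
    ∃ c : ℝ, 0 < c ∧ deriv f r =
      c * ∫ φ in (0:ℝ)..Real.pi,
        (r / σ ^ 2) * (R ^ 2 * Real.sin φ ^ 2 / ((D - 1) * σ ^ 2) - 1) *
          Real.sin φ ^ (D - 2) * Real.exp (r * R * Real.cos φ / σ ^ 2) := by
  obtain ⟨k, rfl⟩ : ∃ k, D = k + 2 := ⟨D - 2, by omega⟩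
  have hk : (k + 2) - 2 = k := by omega
  simp only [hk] at hf ⊢
  have hσ2 : (0:ℝ) < σ ^ 2 := by positivity
  have hσ2' : (σ:ℝ) ^ 2 ≠ 0 := ne_of_gt hσ2
  have hk1 : ((k:ℝ) + 1) ≠ 0 := by positivity
  -- continuity of integrands
  have hcont : ∀ x : ℝ, Continuous fun φ => Real.sin φ ^ k * Real.exp (x * R * Real.cos φ / σ ^ 2) := by
    intro x; fun_prop
  have hcont' : Continuous fun φ => Real.sin φ ^ k * (R * Real.cos φ / σ ^ 2) *
      Real.exp (r * R * Real.cos φ / σ ^ 2) := by fun_prop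
  -- differentiation under the integral sign
  have key := intervalIntegral.hasDerivAt_integral_of_dominated_loc_of_deriv_le
      (F := fun x φ => Real.sin φ ^ k * Real.exp (x * R * Real.cos φ / σ ^ 2))
      (F' := fun x φ => Real.sin φ ^ k * (R * Real.cos φ / σ ^ 2) *
        Real.exp (x * R * Real.cos φ / σ ^ 2))
      (x₀ := r) (a := 0) (b := Real.pi) (μ := volume)
      (bound := fun _ => (R / σ ^ 2) * Real.exp ((r + 1) * R / σ ^ 2))
      (s := Metric.ball r 1) (Metric.ball_mem_nhds r one_pos)
      (Filter.Eventually.of_forall fun x => ((hcont x).aestronglyMeasurable))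
      ((hcont r).intervalIntegrable _ _)
      ((by fun_prop : Continuous fun φ => Real.sin φ ^ k * (R * Real.cos φ / σ ^ 2) *
        Real.exp (r * R * Real.cos φ / σ ^ 2)).aestronglyMeasurable)
      (Filter.Eventually.of_forall (fun t _ x hx => by
        have hxr : |x| < r + 1 := by
          have := abs_sub_abs_le_abs_sub x r
          have hb : |x - r| < 1 := by simpa [Metric.mem_ball, Real.dist_eq] using hx
          have : |x| - |r| < 1 := lt_of_le_of_lt this hb
          rw [abs_of_nonneg hr] at this; linarith
        have h1 : |Real.sin t ^ k| ≤ 1 := by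
          rw [abs_pow]; exact pow_le_one₀ (abs_nonneg _) (Real.abs_sin_le_one t)
        have h2 : |R * Real.cos t / σ ^ 2| ≤ R / σ ^ 2 := by
          rw [abs_div, abs_of_pos hσ2, abs_mul, abs_of_pos hR]
          have h21 : R * |Real.cos t| ≤ R := by
            have := mul_le_mul_of_nonneg_left (Real.abs_cos_le_one t) hR.le
            simpa using this
          exact div_le_div_of_nonneg_right h21 hσ2.le
        have h3 : Real.exp (x * R * Real.cos t / σ ^ 2) ≤ Real.exp ((r + 1) * R / σ ^ 2) := by
          apply Real.exp_le_exp.2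
          apply div_le_div_of_nonneg_right ?_ hσ2.le
          calc x * R * Real.cos t ≤ |x * R * Real.cos t| := le_abs_self _
            _ = |x| * R * |Real.cos t| := by
              rw [abs_mul, abs_mul, abs_of_pos hR]
            _ ≤ (r + 1) * R * 1 := by
              exact mul_le_mul (mul_le_mul_of_nonneg_right hxr.le hR.le)
                (Real.abs_cos_le_one t) (abs_nonneg _)
                (mul_nonneg (by linarith [abs_nonneg x]) hR.le)
            _ = (r + 1) * R := mul_one _
        calc ‖Real.sin t ^ k * (R * Real.cos t / σ ^ 2) * Real.exp (x * R * Real.cos t / σ ^ 2)‖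
            = |Real.sin t ^ k| * |R * Real.cos t / σ ^ 2| * |Real.exp (x * R * Real.cos t / σ ^ 2)| := by
              rw [Real.norm_eq_abs, abs_mul, abs_mul]
          _ ≤ 1 * (R / σ ^ 2) * Real.exp ((r + 1) * R / σ ^ 2) := by
              rw [abs_of_pos (Real.exp_pos _)]
              exact mul_le_mul (mul_le_mul h1 h2 (abs_nonneg _) zero_le_one)
                h3 (Real.exp_pos _).le
                (mul_nonneg zero_le_one (div_nonneg hR.le hσ2.le))
          _ = (R / σ ^ 2) * Real.exp ((r + 1) * R / σ ^ 2) := by ring))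
      ((continuous_const).intervalIntegrable _ _)
      (Filter.Eventually.of_forall (fun t _ x _ => by
        have h1 : HasDerivAt (fun x : ℝ => x * R * Real.cos t / σ ^ 2)
            (R * Real.cos t / σ ^ 2) x := by
          have heq : (fun x : ℝ => x * R * Real.cos t / σ ^ 2)
              = fun x : ℝ => x * (R * Real.cos t / σ ^ 2) := by funext y; ring
          rw [heq]
          simpa using hasDerivAt_mul_const (R * Real.cos t / σ ^ 2) (x := x)
        have h2 := (h1.exp).const_mul (Real.sin t ^ k)
        exact h2.congr_deriv (by ring)))
  obtain ⟨-, hderiv⟩ := key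
  -- derivative of the Gaussian factor
  have hg : HasDerivAt (fun s : ℝ => Real.exp (-s ^ 2 / (2 * σ ^ 2)))
      (Real.exp (-r ^ 2 / (2 * σ ^ 2)) * (-(2 * r) / (2 * σ ^ 2))) r := by
    have h0 : HasDerivAt (fun s : ℝ => -s ^ 2 / (2 * σ ^ 2)) (-(2 * r) / (2 * σ ^ 2)) r := by
      have := ((hasDerivAt_pow 2 r).neg).div_const (2 * σ ^ 2)
      simpa using this
    simpa [mul_comm] using h0.exp
  -- f has this derivative
  have hfe : f = fun s => Real.exp (-s ^ 2 / (2 * σ ^ 2)) *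
      ∫ φ in (0:ℝ)..Real.pi, Real.sin φ ^ k * Real.exp (s * R * Real.cos φ / σ ^ 2) :=
    funext hf
  have hF : HasDerivAt f
      (Real.exp (-r ^ 2 / (2 * σ ^ 2)) * (-(2 * r) / (2 * σ ^ 2)) *
        (∫ φ in (0:ℝ)..Real.pi, Real.sin φ ^ k * Real.exp (r * R * Real.cos φ / σ ^ 2)) +
       Real.exp (-r ^ 2 / (2 * σ ^ 2)) *
        (∫ φ in (0:ℝ)..Real.pi, Real.sin φ ^ k * (R * Real.cos φ / σ ^ 2) *
          Real.exp (r * R * Real.cos φ / σ ^ 2))) r := by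
    rw [hfe]; exact hg.mul hderiv
  -- integration by parts
  have hibp : ∫ φ in (0:ℝ)..Real.pi, ((k:ℝ) + 1) * Real.sin φ ^ k * Real.cos φ *
      Real.exp (r * R * Real.cos φ / σ ^ 2)
      = (r * R / σ ^ 2) * ∫ φ in (0:ℝ)..Real.pi, Real.sin φ ^ (k + 2) *
        Real.exp (r * R * Real.cos φ / σ ^ 2) := by
    have hu : ∀ x ∈ Set.uIcc (0:ℝ) Real.pi, HasDerivAt (fun φ => Real.sin φ ^ (k + 1))
        (((k:ℝ) + 1) * Real.sin x ^ k * Real.cos x) x := by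
      intro x _
      have := (Real.hasDerivAt_sin x).fun_pow (k + 1)
      simpa [Nat.add_sub_cancel, mul_comm, mul_assoc] using this
    have hv : ∀ x ∈ Set.uIcc (0:ℝ) Real.pi, HasDerivAt
        (fun φ => Real.exp (r * R * Real.cos φ / σ ^ 2))
        (Real.exp (r * R * Real.cos x / σ ^ 2) * (r * R * (-Real.sin x) / σ ^ 2)) x := by
      intro x _
      have h1 : HasDerivAt (fun φ : ℝ => r * R * Real.cos φ / σ ^ 2)
          (r * R * (-Real.sin x) / σ ^ 2) x := by
        exact ((Real.hasDerivAt_cos x).const_mul (r * R)).div_const (σ ^ 2)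
      exact h1.exp
    have hInt1 : IntervalIntegrable (fun x => ((k:ℝ) + 1) * Real.sin x ^ k * Real.cos x)
        volume 0 Real.pi := by
      apply Continuous.intervalIntegrable; fun_prop
    have hInt2 : IntervalIntegrable
        (fun x => Real.exp (r * R * Real.cos x / σ ^ 2) * (r * R * (-Real.sin x) / σ ^ 2))
        volume 0 Real.pi := by
      apply Continuous.intervalIntegrable; fun_prop
    have := intervalIntegral.integral_mul_deriv_eq_deriv_mul hu hv hInt1 hInt2
    -- this : ∫ u * v' = u π v π - u 0 v 0 - ∫ u' * v
    rw [Real.sin_pi, Real.sin_zero, zero_pow (Nat.succ_ne_zero k), zero_mul, zero_mul,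
      sub_zero, zero_sub] at this
    have heq1 : ∫ φ in (0:ℝ)..Real.pi, Real.sin φ ^ (k + 1) *
        (Real.exp (r * R * Real.cos φ / σ ^ 2) * (r * R * (-Real.sin φ) / σ ^ 2))
        = -((r * R / σ ^ 2) * ∫ φ in (0:ℝ)..Real.pi, Real.sin φ ^ (k + 2) *
          Real.exp (r * R * Real.cos φ / σ ^ 2)) := by
      rw [← intervalIntegral.integral_const_mul, ← intervalIntegral.integral_neg]
      congr 1; funext φ; ring
    rw [heq1, neg_inj] at this
    linarith [this]
  -- express I' in terms of J
  have hI' : (∫ φ in (0:ℝ)..Real.pi, Real.sin φ ^ k * (R * Real.cos φ / σ ^ 2) *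
      Real.exp (r * R * Real.cos φ / σ ^ 2))
      = (R / (((k:ℝ) + 1) * σ ^ 2)) * ((r * R / σ ^ 2) *
        ∫ φ in (0:ℝ)..Real.pi, Real.sin φ ^ (k + 2) * Real.exp (r * R * Real.cos φ / σ ^ 2)) := by
    rw [← hibp, ← intervalIntegral.integral_const_mul]
    congr 1; funext φ
    field_simp
  -- choose c and finish
  refine ⟨Real.exp (-r ^ 2 / (2 * σ ^ 2)), Real.exp_pos _, ?_⟩
  rw [hF.deriv, hI']
  push_cast
  have hptw : ∀ φ : ℝ,
      (r / σ ^ 2) * (R ^ 2 * Real.sin φ ^ 2 / (((k:ℝ) + 2 - 1) * σ ^ 2) - 1) *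
        Real.sin φ ^ k * Real.exp (r * R * Real.cos φ / σ ^ 2)
      = (r / σ ^ 2) * (R ^ 2 / (((k:ℝ) + 1) * σ ^ 2)) *
          (Real.sin φ ^ (k + 2) * Real.exp (r * R * Real.cos φ / σ ^ 2))
        - (r / σ ^ 2) * (Real.sin φ ^ k * Real.exp (r * R * Real.cos φ / σ ^ 2)) := by
    intro φ
    have hne : ((k:ℝ) + 1) * σ ^ 2 ≠ 0 := by positivity
    have h21 : (k:ℝ) + 2 - 1 = (k:ℝ) + 1 := by ring
    have hpow : Real.sin φ ^ (k + 2) = Real.sin φ ^ k * Real.sin φ ^ 2 := by rw [pow_add]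
    rw [h21, hpow]
    field_simp
  simp_rw [hptw]
  rw [intervalIntegral.integral_sub, intervalIntegral.integral_const_mul,
    intervalIntegral.integral_const_mul]
  · set I := ∫ φ in (0:ℝ)..Real.pi, Real.sin φ ^ k * Real.exp (r * R * Real.cos φ / σ ^ 2)
    set J := ∫ φ in (0:ℝ)..Real.pi, Real.sin φ ^ (k + 2) * Real.exp (r * R * Real.cos φ / σ ^ 2)
    field_simp
    ring
  · apply Continuous.intervalIntegrable; fun_prop
  · apply Continuous.intervalIntegrable; fun_prop
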